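/- Fix a > 0, b ∈ ℝ, a path w, a step Δt > 0, an exponent p ∈ (0, 1), and N ∈ ℕ with N ≥ 1. Set tᵢ = i Δt for integers i, g(t) = b w(t) + a b e^{a t} ∫₀ᵗ e^{−a s} w(s) ds, and for x₀ ∈ ℝ let X_t(x₀) = e^{a t} x₀ + g(t) be the pathwise solution of dX = aX dt + b dW with X₀ = x₀. Then the x-component of the stochastic Lagrangian descriptor, F(x₀) = Σ_{i=−N}^{N−1} |X_{t_{i+1}}(x₀) − X_{t_i}(x₀)|^{p}, is differentiable at every x₀ outside the finite set { sᵢ : −N ≤ i ≤ N−1 } and non-differentiable at each sᵢ, where sᵢ = −( g(t_{i+1}) − g(t_i) ) / ( e^{a t_{i+1}} − e^{a t_i} ). -/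

import Mathlib

open MeasureTheory Filter Topology

/-- The path-dependent part `g(t) = b w(t) + a b e^{a t} ∫₀ᵗ e^{-a s} w(s) ds` of the
pathwise solution of `dX = aX dt + b dW`. -/
noncomputable def gPart (a b : ℝ) (w : ℝ → ℝ) (t : ℝ) : ℝ :=
  b * w t + a * b * Real.exp (a * t) * ∫ s in (0 : ℝ)..t, Real.exp (-a * s) * w s

/-- The pathwise solution `X_t(x₀) = e^{a t} x₀ + g(t)` of `dX = aX dt + b dW` with
`X₀ = x₀`. -/
noncomputable def Xsol (a b : ℝ) (w : ℝ → ℝ) (x₀ t : ℝ) : ℝ :=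
  Real.exp (a * t) * x₀ + gPart a b w t

/-- The singular point of the `i`-th increment of the stochastic Lagrangian descriptor
on the uniform grid `tᵢ = i Δt`:
`sᵢ = -(g(t_{i+1}) - g(tᵢ)) / (e^{a t_{i+1}} - e^{a tᵢ})`. -/
noncomputable def singPt (a b : ℝ) (w : ℝ → ℝ) (Δt : ℝ) (i : ℤ) : ℝ :=
  -(gPart a b w (((i : ℝ) + 1) * Δt) - gPart a b w ((i : ℝ) * Δt)) /
    (Real.exp (a * (((i : ℝ) + 1) * Δt)) - Real.exp (a * ((i : ℝ) * Δt)))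

/-- `|x|^p` is not differentiable at `0` when `0 < p < 1`. -/
lemma not_differentiableAt_abs_rpow {p : ℝ} (hp0 : 0 < p) (hp1 : p < 1) :
    ¬ DifferentiableAt ℝ (fun x : ℝ => |x| ^ p) 0 := by
  intro h
  have hd := h.hasDerivAt
  rw [hasDerivAt_iff_tendsto_slope] at hd
  have h1 : Tendsto (slope (fun x : ℝ => |x| ^ p) 0) (𝓝[>] 0)
      (𝓝 (deriv (fun x : ℝ => |x| ^ p) 0)) :=
    hd.mono_left (nhdsWithin_mono _ fun x hx => ne_of_gt hx)
  have h2 : Tendsto (fun x : ℝ => x ^ (1 - p)) (𝓝[>] 0) (𝓝[>] 0) := by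
    apply tendsto_nhdsWithin_of_tendsto_nhds_of_eventually_within
    · have := (Real.continuousAt_rpow_const 0 (1 - p) (Or.inr (by linarith))).tendsto
      rw [Real.zero_rpow (by linarith : (1 : ℝ) - p ≠ 0)] at this
      exact this.mono_left nhdsWithin_le_nhds
    · filter_upwards [self_mem_nhdsWithin] with x hx
      exact Real.rpow_pos_of_pos hx _
  have h3 : Tendsto (slope (fun x : ℝ => |x| ^ p) 0) (𝓝[>] 0) atTop := by
    refine h2.inv_tendsto_nhdsGT_zero.congr' ?_
    filter_upwards [self_mem_nhdsWithin] with x hx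
    have hx0 : (0 : ℝ) < x := hx
    have : (x ^ (1 - p))⁻¹ = x ^ (p - 1) := by
      rw [← Real.rpow_neg hx0.le, neg_sub]
    rw [Pi.inv_apply, this, slope_def_field, abs_of_pos hx0, abs_zero,
      Real.zero_rpow hp0.ne', sub_zero, sub_zero, Real.rpow_sub_one hx0.ne']
  exact not_tendsto_nhds_of_tendsto_atTop h3 _ h1

/-- `|g y|^p` is differentiable where `g` is differentiable and nonzero. -/
lemma diff_abs_rpow {g : ℝ → ℝ} {x p : ℝ} (hg : DifferentiableAt ℝ g x)
    (hne : g x ≠ 0) : DifferentiableAt ℝ (fun y => |g y| ^ p) x := by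
  have h1 : DifferentiableAt ℝ (fun y => |g y|) x :=
    (differentiableAt_abs hne).comp x hg
  exact ((Real.hasDerivAt_rpow_const (p := p)
    (Or.inl (abs_ne_zero.2 hne))).differentiableAt).comp x h1

theorem SLD_x_component_singularities
    (a : ℝ) (ha : 0 < a) (b : ℝ) (w : ℝ → ℝ) (hw : Continuous w) (hw0 : w 0 = 0)
    (Δt : ℝ) (hΔt : 0 < Δt) (p : ℝ) (hp0 : 0 < p) (hp1 : p < 1)
    (N : ℕ) (hN : 1 ≤ N) :
    (∀ x₀ : ℝ,
      x₀ ∉ (fun i : ℤ => singPt a b w Δt i) '' Set.Icc (-(N : ℤ)) ((N : ℤ) - 1) →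
      DifferentiableAt ℝ
        (fun y : ℝ => ∑ i ∈ Finset.Icc (-(N : ℤ)) ((N : ℤ) - 1),
          |Xsol a b w y (((i : ℝ) + 1) * Δt) - Xsol a b w y ((i : ℝ) * Δt)| ^ p) x₀) ∧
    (∀ i ∈ Finset.Icc (-(N : ℤ)) ((N : ℤ) - 1),
      ¬ DifferentiableAt ℝ
        (fun y : ℝ => ∑ j ∈ Finset.Icc (-(N : ℤ)) ((N : ℤ) - 1),
          |Xsol a b w y (((j : ℝ) + 1) * Δt) - Xsol a b w y ((j : ℝ) * Δt)| ^ p)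
        (singPt a b w Δt i)) := by
  -- the increment slope
  set c : ℤ → ℝ := fun j =>
    Real.exp (a * (((j : ℝ) + 1) * Δt)) - Real.exp (a * ((j : ℝ) * Δt)) with hc_def
  have hc : ∀ j : ℤ, 0 < c j := by
    intro j
    have : a * ((j : ℝ) * Δt) < a * (((j : ℝ) + 1) * Δt) := by nlinarith
    simpa [hc_def] using Real.exp_lt_exp.2 this
  have key : ∀ (j : ℤ) (y : ℝ),
      Xsol a b w y (((j : ℝ) + 1) * Δt) - Xsol a b w y ((j : ℝ) * Δt)
        = c j * (y - singPt a b w Δt j) := by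
    intro j y
    have hne := (hc j).ne'
    simp only [Xsol, singPt, hc_def] at *
    generalize Real.exp (a * (((j : ℝ) + 1) * Δt)) = E1 at *
    generalize Real.exp (a * ((j : ℝ) * Δt)) = E0 at *
    field_simp
    ring
  have hXdiff : ∀ (j : ℤ) (x : ℝ), DifferentiableAt ℝ
      (fun y => Xsol a b w y (((j : ℝ) + 1) * Δt) - Xsol a b w y ((j : ℝ) * Δt)) x := by
    intro j x
    simp only [Xsol]
    fun_prop
  constructor
  · intro x₀ hx₀
    apply DifferentiableAt.fun_sum
    intro j hj
    apply diff_abs_rpow (hXdiff j x₀)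
    rw [key j x₀]
    have hs : x₀ ≠ singPt a b w Δt j := by
      intro h
      exact hx₀ ⟨j, by simpa using hj, h.symm⟩
    exact mul_ne_zero (hc j).ne' (sub_ne_zero.2 hs)
  · intro i hi hdiff
    set s := singPt a b w Δt i with hs_def
    set T := Finset.Icc (-(N : ℤ)) ((N : ℤ) - 1) with hT_def
    set S := T.filter (fun j => singPt a b w Δt j = s) with hS_def
    set C := ∑ j ∈ S, (c j) ^ p with hC_def
    have hiS : i ∈ S := Finset.mem_filter.2 ⟨hi, rfl⟩
    have hCpos : 0 < C := by
      apply Finset.sum_pos'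
      · exact fun j _ => (Real.rpow_pos_of_pos (hc j) p).le
      · exact ⟨i, hiS, Real.rpow_pos_of_pos (hc i) p⟩
    -- the sum over S is C * |y - s|^p
    have hSsum : ∀ y : ℝ, (∑ j ∈ S,
        |Xsol a b w y (((j : ℝ) + 1) * Δt) - Xsol a b w y ((j : ℝ) * Δt)| ^ p)
        = C * |y - s| ^ p := by
      intro y
      rw [hC_def, Finset.sum_mul]
      apply Finset.sum_congr rfl
      intro j hj
      have hjs : singPt a b w Δt j = s := (Finset.mem_filter.1 hj).2
      rw [key j y, hjs, abs_mul, abs_of_pos (hc j),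
        Real.mul_rpow (hc j).le (abs_nonneg _)]
    -- the sum over the complement is differentiable at s
    have hGdiff : DifferentiableAt ℝ (fun y => ∑ j ∈ T.filter
        (fun j => ¬ singPt a b w Δt j = s),
        |Xsol a b w y (((j : ℝ) + 1) * Δt) - Xsol a b w y ((j : ℝ) * Δt)| ^ p) s := by
      apply DifferentiableAt.fun_sum
      intro j hj
      apply diff_abs_rpow (hXdiff j s)
      rw [key j s]
      exact mul_ne_zero (hc j).ne'
        (sub_ne_zero.2 fun h => (Finset.mem_filter.1 hj).2 h.symm)
    -- split the sum
    have hsplit : (fun y : ℝ => ∑ j ∈ T,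
        |Xsol a b w y (((j : ℝ) + 1) * Δt) - Xsol a b w y ((j : ℝ) * Δt)| ^ p)
        = (fun y : ℝ => C * |y - s| ^ p + ∑ j ∈ T.filter (fun j => ¬ singPt a b w Δt j = s),
            |Xsol a b w y (((j : ℝ) + 1) * Δt) - Xsol a b w y ((j : ℝ) * Δt)| ^ p) := by
      funext y
      rw [← hSsum y, hS_def]
      exact (Finset.sum_filter_add_sum_filter_not T
        (fun j => singPt a b w Δt j = s) _).symm
    rw [hsplit] at hdiff
    have hH : DifferentiableAt ℝ (fun y : ℝ => C * |y - s| ^ p) s := by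
      have := hdiff.fun_sub hGdiff
      simpa using this
    have habs : DifferentiableAt ℝ (fun y : ℝ => |y - s| ^ p) s := by
      have h2 := hH.const_mul C⁻¹
      refine h2.congr_of_eventuallyEq (Filter.Eventually.of_forall fun y => ?_)
      field_simp
    have h0 : DifferentiableAt ℝ (fun x : ℝ => |x| ^ p) 0 := by
      have hcomp : DifferentiableAt ℝ
          (fun x : ℝ => |(x + s) - s| ^ p) 0 := by
        have habs' : DifferentiableAt ℝ (fun y : ℝ => |y - s| ^ p) ((0:ℝ) + s) := by
          simpa using habs
        exact habs'.comp 0 (differentiableAt_id.add_const s)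
      refine hcomp.congr_of_eventuallyEq (Filter.Eventually.of_forall fun x => ?_)
      simp
    exact not_differentiableAt_abs_rpow hp0 hp1 h0
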